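/- Let a ≥ 3 be an odd integer and p ∈ (0,1) with q = 1 − p. Let z_1,…,z_m ∈ {1,…,a−1} be pairwise distinct sites and π_1,…,π_m > 0 strictly positive weights. Suppose there exists a constant C ∈ ℝ such that Σ_{i=1}^m π_i·u(z_i;γ) = C·Σ_{i=1}^m π_i·s(z_i;γ) for every γ ∈ (0,1). Then: (1) the site set is closed under reflection, i.e., a − z_i ∈ {z_1,…,z_m} for every i; (2) C = C* = (q/p)^{a/2}/(1 + (q/p)^{a/2}); and (3) the weights satisfy π_i·(p/q)^{(a−z_i)/2} = π_{j(i)}·(p/q)^{z_i/2} for each i, where z_{j(i)} = a − z_i. In particular, if the site set is not symmetric under z ↦ a − z, no strictly positive weights can make the coupling constant independent of γ. -/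

import Mathlib

/-- Eigenvalue `λ_ν = 2√(p(1−p))·cos(πν/a)`. -/
noncomputable def lam (a : ℕ) (p : ℝ) (ν : ℕ) : ℝ :=
  2 * Real.sqrt (p * (1 - p)) * Real.cos (Real.pi * ν / a)

/-- Spectral transfer function `f_ν(γ) = λ_ν(1−γ)/(1 − λ_ν(1−γ))`. -/
noncomputable def fer (a : ℕ) (p : ℝ) (ν : ℕ) (γ : ℝ) : ℝ :=
  lam a p ν * (1 - γ) / (1 - lam a p ν * (1 - γ))

/-- Spectral coefficient `A_ν(w) = (2/a)·(q/p)^{w/2}·sin(πνw/a)·sin(πν/a)`. -/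
noncomputable def Acoef (a : ℕ) (p : ℝ) (ν w : ℕ) : ℝ :=
  (2 / a) * ((1 - p) / p) ^ ((w : ℝ) / 2) *
    Real.sin (Real.pi * ν * w / a) * Real.sin (Real.pi * ν / a)

/-- Spectral coefficient `B_ν(w) = (2/a)·(p/q)^{(a−w)/2}·sin(πν(a−w)/a)·sin(πν/a)`. -/
noncomputable def Bcoef (a : ℕ) (p : ℝ) (ν w : ℕ) : ℝ :=
  (2 / a) * (p / (1 - p)) ^ (((a : ℝ) - w) / 2) *
    Real.sin (Real.pi * ν * ((a : ℝ) - w) / a) * Real.sin (Real.pi * ν / a)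

/-- Discounted first-cycle ruin probability `u(z;γ) = Σ_ν A_ν(z)·f_ν(γ)`. -/
noncomputable def usum (a : ℕ) (p : ℝ) (z : ℕ) (γ : ℝ) : ℝ :=
  ∑ ν ∈ Finset.Icc 1 (a - 1), Acoef a p ν z * fer a p ν γ

/-- Discounted first-cycle absorption probability
`s(z;γ) = Σ_ν (A_ν(z)+B_ν(z))·f_ν(γ)`. -/
noncomputable def ssum (a : ℕ) (p : ℝ) (z : ℕ) (γ : ℝ) : ℝ :=
  ∑ ν ∈ Finset.Icc 1 (a - 1), (Acoef a p ν z + Bcoef a p ν z) * fer a p ν γ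

lemma sum_cos_eq (a : ℕ) (ha : 0 < a) (k : ℤ) (hk : ¬ ((2 * (a:ℤ)) ∣ k)) :
    ∑ ν ∈ Finset.range a, Real.cos (Real.pi * k * ν / a) = if Even k then 0 else 1 := by
  have haR : (a:ℝ) ≠ 0 := Nat.cast_ne_zero.mpr ha.ne'
  set θ : ℝ := Real.pi * k / a with hθ
  have hsin : Real.sin (θ/2) ≠ 0 := by
    intro h
    rw [Real.sin_eq_zero_iff] at h
    obtain ⟨n, hn⟩ := h
    apply hk
    have h2 : (k:ℝ) = 2 * a * n := by
      have : (n:ℝ) * Real.pi = Real.pi * k / a / 2 := hn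
      field_simp at this
      nlinarith [Real.pi_pos]
    exact ⟨n, by exact_mod_cast h2⟩
  have tel : ∀ ν : ℕ, 2 * Real.sin (θ/2) * Real.cos (Real.pi * k * ν / a)
      = Real.sin (((ν:ℝ)+1) * θ - θ/2) - Real.sin ((ν:ℝ) * θ - θ/2) := by
    intro ν
    have harg : Real.pi * k * ν / a = (ν:ℝ) * θ := by rw [hθ]; ring
    have h := Real.sin_sub_sin (((ν:ℝ)+1) * θ - θ/2) ((ν:ℝ) * θ - θ/2)
    have e1 : ((((ν:ℝ)+1) * θ - θ/2) - ((ν:ℝ) * θ - θ/2))/2 = θ/2 := by ring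
    have e2 : ((((ν:ℝ)+1) * θ - θ/2) + ((ν:ℝ) * θ - θ/2))/2 = (ν:ℝ) * θ := by ring
    rw [e1, e2] at h
    rw [harg, h]
  have hsum : 2 * Real.sin (θ/2) * (∑ ν ∈ Finset.range a, Real.cos (Real.pi * k * ν / a))
      = Real.sin ((a:ℝ) * θ - θ/2) - Real.sin ((0:ℝ) * θ - θ/2) := by
    rw [Finset.mul_sum]
    rw [show Real.sin ((a:ℝ) * θ - θ/2) - Real.sin ((0:ℝ) * θ - θ/2)
        = (fun ν : ℕ => Real.sin ((ν:ℝ) * θ - θ/2)) a - (fun ν : ℕ => Real.sin ((ν:ℝ) * θ - θ/2)) 0 by norm_num]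
    rw [← Finset.sum_range_sub (fun ν : ℕ => Real.sin ((ν:ℝ) * θ - θ/2)) a]
    refine Finset.sum_congr rfl fun ν _ => ?_
    rw [tel ν]; push_cast; ring_nf
  have haθ : (a:ℝ) * θ = Real.pi * k := by rw [hθ]; field_simp
  rcases Int.even_or_odd k with he | ho
  · obtain ⟨n, hn⟩ := he
    have harg : (a:ℝ) * θ - θ/2 = (-(θ/2)) + (n:ℤ) * (2 * Real.pi) := by
      rw [haθ, hn]; push_cast; ring
    rw [harg, Real.sin_add_int_mul_two_pi] at hsum
    simp only [zero_mul, zero_sub, Real.sin_neg] at hsum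
    rw [if_pos ⟨n, hn⟩]
    have h2 : 2 * Real.sin (θ/2) * (∑ ν ∈ Finset.range a, Real.cos (Real.pi * k * ν / a)) = 0 := by
      rw [hsum]; ring
    rcases mul_eq_zero.mp h2 with h | h
    · rcases mul_eq_zero.mp h with h' | h'
      · norm_num at h'
      · exact absurd h' hsin
    · exact h
  · obtain ⟨n, hn⟩ := ho
    have harg : (a:ℝ) * θ - θ/2 = (Real.pi - θ/2) + (n:ℤ) * (2 * Real.pi) := by
      rw [haθ, hn]; push_cast; ring
    rw [harg, Real.sin_add_int_mul_two_pi, Real.sin_pi_sub] at hsum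
    simp only [zero_mul, zero_sub, Real.sin_neg] at hsum
    rw [if_neg (by simp only [Int.not_even_iff_odd]; exact ⟨n, hn⟩)]
    have : 2 * Real.sin (θ/2) * (∑ ν ∈ Finset.range a, Real.cos (Real.pi * k * ν / a))
        = 2 * Real.sin (θ/2) * 1 := by rw [hsum]; ring
    exact mul_left_cancel₀ (by exact mul_ne_zero two_ne_zero hsin) this

lemma not_dvd_of_bounds {d k : ℤ} (hk : k ≠ 0) (hlo : -d < k) (hhi : k < d) : ¬ d ∣ k := by
  intro h
  have := Int.le_of_dvd (abs_pos.mpr hk) ((dvd_abs d k).mpr h)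
  rcases abs_cases k with ⟨h1, _⟩ | ⟨h1, _⟩ <;> omega

lemma orth (a : ℕ) (ha : 3 ≤ a) (z w : ℕ) (hz : z ∈ Finset.Icc 1 (a-1)) (hw : w ∈ Finset.Icc 1 (a-1)) :
    ∑ ν ∈ Finset.Icc 1 (a-1), Real.sin (Real.pi * ν * z / a) * Real.sin (Real.pi * ν * w / a)
      = if z = w then (a:ℝ)/2 else 0 := by
  have ha0 : 0 < a := by omega
  have haR : (a:ℝ) ≠ 0 := Nat.cast_ne_zero.mpr ha0.ne'
  rw [Finset.mem_Icc] at hz hw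
  have hzZ : (1:ℤ) ≤ (z:ℤ) ∧ (z:ℤ) ≤ (a:ℤ) - 1 := by omega
  have hwZ : (1:ℤ) ≤ (w:ℤ) ∧ (w:ℤ) ≤ (a:ℤ) - 1 := by omega
  have hext : ∑ ν ∈ Finset.Icc 1 (a-1), Real.sin (Real.pi * ν * z / a) * Real.sin (Real.pi * ν * w / a)
      = ∑ ν ∈ Finset.range a, Real.sin (Real.pi * ν * z / a) * Real.sin (Real.pi * ν * w / a) := by
    refine Finset.sum_subset (fun ν hν => ?_) (fun ν hν hν' => ?_)
    · rw [Finset.mem_Icc] at hν; rw [Finset.mem_range]; omega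
    · rw [Finset.mem_range] at hν; rw [Finset.mem_Icc] at hν'
      have : ν = 0 := by omega
      subst this; norm_num
  rw [hext]
  have hterm : ∀ ν : ℕ, Real.sin (Real.pi * ν * z / a) * Real.sin (Real.pi * ν * w / a)
      = (Real.cos (Real.pi * (((z:ℤ) - w) : ℤ) * ν / a) - Real.cos (Real.pi * (((z:ℤ) + w) : ℤ) * ν / a)) / 2 := by
    intro ν
    have h := Real.cos_sub_cos (Real.pi * ((((z:ℤ) - w) : ℤ):ℝ) * ν / a) (Real.pi * ((((z:ℤ) + w) : ℤ):ℝ) * ν / a)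
    have e1 : (Real.pi * ((((z:ℤ) - w) : ℤ):ℝ) * ν / a + Real.pi * ((((z:ℤ) + w) : ℤ):ℝ) * ν / a)/2
        = Real.pi * ν * z / a := by push_cast; ring
    have e2 : (Real.pi * ((((z:ℤ) - w) : ℤ):ℝ) * ν / a - Real.pi * ((((z:ℤ) + w) : ℤ):ℝ) * ν / a)/2
        = -(Real.pi * ν * w / a) := by push_cast; ring
    rw [e1, e2, Real.sin_neg] at h
    linarith
  simp only [hterm]
  rw [← Finset.sum_div, Finset.sum_sub_distrib]
  have hsum2 : ∑ ν ∈ Finset.range a, Real.cos (Real.pi * (((z:ℤ) + w):ℤ) * ν / a)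
      = if Even ((z:ℤ) + w) then 0 else 1 :=
    sum_cos_eq a ha0 _ (not_dvd_of_bounds (by omega) (by omega) (by omega))
  by_cases hzw : z = w
  · subst hzw
    have hsum1 : ∑ ν ∈ Finset.range a, Real.cos (Real.pi * (((z:ℤ) - z):ℤ) * ν / a) = a := by
      rw [show ((z:ℤ) - z) = 0 by ring]
      simp
    rw [hsum1, hsum2, if_pos rfl, if_pos ⟨(z:ℤ), by ring⟩]
    ring
  · have hsum1 : ∑ ν ∈ Finset.range a, Real.cos (Real.pi * (((z:ℤ) - w):ℤ) * ν / a)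
        = if Even ((z:ℤ) - w) then 0 else 1 :=
      sum_cos_eq a ha0 _ (not_dvd_of_bounds (by omega) (by omega) (by omega))
    rw [hsum1, hsum2, if_neg hzw]
    have hpar : Even ((z:ℤ) - w) ↔ Even ((z:ℤ) + w) := by
      rw [Int.even_sub, Int.even_add]
    by_cases hE : Even ((z:ℤ) - w)
    · rw [if_pos hE, if_pos (hpar.mp hE)]; ring
    · rw [if_neg hE, if_neg (fun h => hE (hpar.mpr h))]; ring

lemma lin_indep (s : Finset ℕ) (L : ℕ → ℝ) (c : ℕ → ℝ)
    (hne : ∀ ν ∈ s, L ν ≠ 0) (hlt : ∀ ν ∈ s, |L ν| < 1)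
    (hinj : ∀ ν ∈ s, ∀ η ∈ s, L ν = L η → ν = η)
    (h : ∀ t ∈ Set.Ioo (0:ℝ) 1, ∑ ν ∈ s, c ν * (L ν * t / (1 - L ν * t)) = 0) :
    ∀ ν ∈ s, c ν = 0 := by
  set P : Polynomial ℝ :=
    ∑ ν ∈ s, Polynomial.C (c ν * L ν) * Polynomial.X *
      ∏ η ∈ s.erase ν, (1 - Polynomial.C (L η) * Polynomial.X) with hP
  have hevalP : ∀ t : ℝ, P.eval t = ∑ ν ∈ s, c ν * L ν * t * ∏ η ∈ s.erase ν, (1 - L η * t) := by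
    intro t
    rw [hP, Polynomial.eval_finset_sum]
    refine Finset.sum_congr rfl fun ν _ => ?_
    rw [Polynomial.eval_mul, Polynomial.eval_mul, Polynomial.eval_C, Polynomial.eval_X,
      Polynomial.eval_prod]
    congr 1
    refine Finset.prod_congr rfl fun η _ => ?_
    simp
  have hzero : ∀ t ∈ Set.Ioo (0:ℝ) 1, P.eval t = 0 := by
    intro t ht
    have hd : ∀ ν ∈ s, 1 - L ν * t ≠ 0 := by
      intro ν hν
      have habs : |L ν * t| < 1 := by
        rw [abs_mul]
        calc |L ν| * |t| ≤ |L ν| * 1 := by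
              refine mul_le_mul_of_nonneg_left ?_ (abs_nonneg _)
              rw [abs_of_pos ht.1]; exact le_of_lt ht.2
          _ < 1 := by rw [mul_one]; exact hlt ν hν
      have := (abs_lt.mp habs).2
      intro h0; linarith
    rw [hevalP]
    calc ∑ ν ∈ s, c ν * L ν * t * ∏ η ∈ s.erase ν, (1 - L η * t)
        = (∑ ν ∈ s, c ν * (L ν * t / (1 - L ν * t))) * ∏ η ∈ s, (1 - L η * t) := by
          rw [Finset.sum_mul]
          refine Finset.sum_congr rfl fun ν hν => ?_
          rw [← Finset.mul_prod_erase s _ hν]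
          field_simp [hd ν hν]
      _ = 0 := by rw [h t ht, zero_mul]
  have hP0 : P = 0 := by
    refine Polynomial.eq_zero_of_infinite_isRoot P ?_
    refine Set.Infinite.mono (fun t ht => hzero t ht) (Set.Ioo_infinite (by norm_num : (0:ℝ) < 1))
  intro μ hμ
  have he := hevalP (L μ)⁻¹
  rw [hP0, Polynomial.eval_zero] at he
  have hL := hne μ hμ
  have hsing : ∑ ν ∈ s, c ν * L ν * (L μ)⁻¹ * ∏ η ∈ s.erase ν, (1 - L η * (L μ)⁻¹)
      = c μ * ∏ η ∈ s.erase μ, (1 - L η * (L μ)⁻¹) := by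
    rw [Finset.sum_eq_single μ]
    · field_simp
    · intro ν hν hνμ
      apply mul_eq_zero_of_right
      refine Finset.prod_eq_zero (Finset.mem_erase.mpr ⟨fun h => hνμ h.symm, hμ⟩) ?_
      rw [mul_inv_cancel₀ hL]; ring
    · intro hμ'; exact absurd hμ hμ'
  have hprod : ∏ η ∈ s.erase μ, (1 - L η * (L μ)⁻¹) ≠ 0 := by
    rw [Finset.prod_ne_zero_iff]
    intro η hη h0
    have hηs := (Finset.mem_erase.mp hη).2
    have hLη : L η = L μ := by
      have h1 : L η * (L μ)⁻¹ = 1 := by linarith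
      rw [← div_eq_mul_inv, div_eq_one_iff_eq hL] at h1
      exact h1
    exact (Finset.mem_erase.mp hη).1 (hinj η hηs μ hμ hLη)
  have : c μ * ∏ η ∈ s.erase μ, (1 - L η * (L μ)⁻¹) = 0 := by rw [← hsing, ← he]
  exact (mul_eq_zero.mp this).resolve_right hprod

/-- necessity of the geometric symmetry (odd `a`). If strictly
positive weights on distinct sites make the coupling constant independent of
`γ`, then (1) the site set is closed under `z ↦ a − z`, (2) the constant is
`C* = (q/p)^{a/2}/(1+(q/p)^{a/2})`, and (3) the weights satisfy the critical
balance `π_i·(p/q)^{(a−z_i)/2} = π_{j(i)}·(p/q)^{z_i/2}` where `z_{j(i)} = a − z_i`. -/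
theorem stmt_19 (a : ℕ) (ha : 3 ≤ a) (hOdd : Odd a) (p : ℝ)
    (hp : p ∈ Set.Ioo (0 : ℝ) 1)
    (m : ℕ) (hm : 0 < m) (z : Fin m → ℕ)
    (hzmem : ∀ i, z i ∈ Finset.Icc 1 (a - 1))
    (hzinj : Function.Injective z)
    (π : Fin m → ℝ) (hπ : ∀ i, 0 < π i) (C : ℝ)
    (hinv : ∀ γ ∈ Set.Ioo (0 : ℝ) 1,
      ∑ i, π i * usum a p (z i) γ = C * ∑ i, π i * ssum a p (z i) γ) :
    (∀ i, ∃ j, z j = a - z i) ∧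
    C = ((1 - p) / p) ^ ((a : ℝ) / 2) / (1 + ((1 - p) / p) ^ ((a : ℝ) / 2)) ∧
    (∀ i j, z j = a - z i →
      π i * (p / (1 - p)) ^ (((a : ℝ) - z i) / 2) =
        π j * (p / (1 - p)) ^ ((z i : ℝ) / 2)) := by
  obtain ⟨hp0, hp1⟩ := hp
  have hq0 : (0:ℝ) < 1 - p := by linarith
  have ha0 : 0 < a := by omega
  have haR : (0:ℝ) < (a:ℝ) := by exact_mod_cast ha0
  have haR' : (a:ℝ) ≠ 0 := ne_of_gt haR
  have hr : (0:ℝ) < (1 - p)/p := div_pos hq0 hp0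
  have hR : (0:ℝ) < p/(1 - p) := div_pos hp0 hq0
  have hpq : (0:ℝ) < p * (1 - p) := mul_pos hp0 hq0
  have hrpos : ∀ x : ℝ, 0 < ((1 - p)/p) ^ x := fun x => Real.rpow_pos_of_pos hr x
  have hRpos : ∀ x : ℝ, 0 < (p/(1 - p)) ^ x := fun x => Real.rpow_pos_of_pos hR x
  -- angle facts
  have hmem : ∀ ν ∈ Finset.Icc 1 (a-1), Real.pi * ν / a ∈ Set.Ioo 0 Real.pi := by
    intro ν hν
    rw [Finset.mem_Icc] at hν
    have hν0 : (0:ℝ) < (ν:ℝ) := by exact_mod_cast (by omega : 0 < ν)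
    have hνa : (ν:ℝ) < (a:ℝ) := by exact_mod_cast (by omega : ν < a)
    constructor
    · exact div_pos (mul_pos Real.pi_pos hν0) haR
    · rw [div_lt_iff₀ haR]
      nlinarith [Real.pi_pos]
  have hsinne : ∀ ν ∈ Finset.Icc 1 (a-1), Real.sin (Real.pi * ν / a) ≠ 0 := fun ν hν =>
    ne_of_gt (Real.sin_pos_of_pos_of_lt_pi (hmem ν hν).1 (hmem ν hν).2)
  have h2s : (0:ℝ) < Real.sqrt (p * (1 - p)) := Real.sqrt_pos.mpr hpq
  have hOddZ : Odd (a:ℤ) := by exact_mod_cast hOdd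
  have hcosne : ∀ ν ∈ Finset.Icc 1 (a-1), Real.cos (Real.pi * ν / a) ≠ 0 := by
    intro ν hν h
    rw [Real.cos_eq_zero_iff] at h
    obtain ⟨n, hn⟩ := h
    have h2 : Real.pi * (2*ν) = Real.pi * ((2*n+1)*a) := by
      field_simp at hn
      nlinarith [Real.pi_pos]
    have h3 : (2*(ν:ℝ)) = ((2*(n:ℝ)+1)*a) := mul_left_cancel₀ Real.pi_ne_zero h2
    have h4 : (2*(ν:ℤ)) = ((2*n+1)*(a:ℤ)) := by exact_mod_cast h3
    have hev : Even (2*(ν:ℤ)) := ⟨ν, by ring⟩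
    have hod : Odd ((2*n+1)*(a:ℤ)) := Odd.mul ⟨n, by ring⟩ hOddZ
    rw [h4] at hev
    exact (Int.not_even_iff_odd.mpr hod) hev
  have hlamne : ∀ ν ∈ Finset.Icc 1 (a-1), lam a p ν ≠ 0 := by
    intro ν hν
    exact mul_ne_zero (mul_ne_zero two_ne_zero (ne_of_gt h2s)) (hcosne ν hν)
  have hsqle : 2 * Real.sqrt (p * (1 - p)) ≤ 1 := by
    have h14 : Real.sqrt ((1:ℝ)/4) = 1/2 := by
      rw [show (1/4:ℝ) = (1/2)^2 by norm_num, Real.sqrt_sq (by norm_num : (0:ℝ) ≤ 1/2)]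
    have hle : p * (1 - p) ≤ 1/4 := by nlinarith [sq_nonneg (2*p - 1)]
    have := Real.sqrt_le_sqrt hle
    rw [h14] at this
    linarith
  have hlamlt : ∀ ν ∈ Finset.Icc 1 (a-1), |lam a p ν| < 1 := by
    intro ν hν
    have hm' := hmem ν hν
    have hcos1 : Real.cos (Real.pi * ν / a) < 1 := by
      have := Real.strictAntiOn_cos (Set.mem_Icc.mpr ⟨le_refl 0, le_of_lt Real.pi_pos⟩)
        (Set.mem_Icc.mpr ⟨le_of_lt hm'.1, le_of_lt hm'.2⟩) hm'.1
      rwa [Real.cos_zero] at this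
    have hcos2 : -1 < Real.cos (Real.pi * ν / a) := by
      have := Real.strictAntiOn_cos (Set.mem_Icc.mpr ⟨le_of_lt hm'.1, le_of_lt hm'.2⟩)
        (Set.mem_Icc.mpr ⟨le_of_lt Real.pi_pos, le_refl Real.pi⟩) hm'.2
      rwa [Real.cos_pi] at this
    have habs : |Real.cos (Real.pi * ν / a)| < 1 := abs_lt.mpr ⟨hcos2, hcos1⟩
    rw [lam, abs_mul]
    calc |2 * Real.sqrt (p * (1-p))| * |Real.cos (Real.pi * ν / a)|
        ≤ 1 * |Real.cos (Real.pi * ν / a)| := by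
          refine mul_le_mul_of_nonneg_right ?_ (abs_nonneg _)
          rw [abs_of_pos (by positivity)]
          exact hsqle
      _ < 1 := by rw [one_mul]; exact habs
  have hlaminj : ∀ ν ∈ Finset.Icc 1 (a-1), ∀ η ∈ Finset.Icc 1 (a-1),
      lam a p ν = lam a p η → ν = η := by
    intro ν hν η hη h
    have hm1 := hmem ν hν
    have hm2 := hmem η hη
    rw [lam, lam] at h
    have hc := mul_left_cancel₀ (mul_ne_zero two_ne_zero (ne_of_gt h2s)) h
    have := Real.injOn_cos (Set.mem_Icc.mpr ⟨le_of_lt hm1.1, le_of_lt hm1.2⟩)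
      (Set.mem_Icc.mpr ⟨le_of_lt hm2.1, le_of_lt hm2.2⟩) hc
    field_simp [Real.pi_ne_zero] at this
    exact_mod_cast this
  -- Step A : per-eigenvalue identities
  have hc : ∀ ν ∈ Finset.Icc 1 (a-1),
      (∑ i, π i * (Acoef a p ν (z i) - C * (Acoef a p ν (z i) + Bcoef a p ν (z i)))) = 0 := by
    refine lin_indep (Finset.Icc 1 (a-1)) (lam a p)
      (fun ν => ∑ i, π i * (Acoef a p ν (z i) - C * (Acoef a p ν (z i) + Bcoef a p ν (z i))))
      hlamne hlamlt hlaminj ?_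
    intro t ht
    have hγ : 1 - t ∈ Set.Ioo (0:ℝ) 1 := ⟨by linarith [ht.2], by linarith [ht.1]⟩
    have h2 := hinv (1 - t) hγ
    have hfer : ∀ ν : ℕ, fer a p ν (1 - t) = lam a p ν * t / (1 - lam a p ν * t) := by
      intro ν; rw [fer, show (1:ℝ) - (1 - t) = t by ring]
    calc ∑ ν ∈ Finset.Icc 1 (a-1),
          (∑ i, π i * (Acoef a p ν (z i) - C * (Acoef a p ν (z i) + Bcoef a p ν (z i))))
            * (lam a p ν * t / (1 - lam a p ν * t))
        = ∑ ν ∈ Finset.Icc 1 (a-1),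
          (∑ i, π i * (Acoef a p ν (z i) - C * (Acoef a p ν (z i) + Bcoef a p ν (z i))))
            * fer a p ν (1 - t) :=
          Finset.sum_congr rfl fun ν _ => by rw [hfer ν]
      _ = (∑ i, π i * usum a p (z i) (1-t)) - C * (∑ i, π i * ssum a p (z i) (1-t)) := by
          unfold usum ssum
          simp only [Finset.sum_mul, Finset.mul_sum, ← Finset.sum_sub_distrib]
          rw [Finset.sum_comm]
          exact Finset.sum_congr rfl fun ν _ => Finset.sum_congr rfl fun i _ => by ring
      _ = 0 := by rw [h2]; ring
  -- Step B : divide out the common factor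
  have hD0 : ∀ ν ∈ Finset.Icc 1 (a-1),
      (∑ i, ((1-C) * (π i * ((1-p)/p) ^ ((z i:ℝ)/2)) * Real.sin (Real.pi * ν * (z i) / a)
        - C * (π i * (p/(1-p)) ^ (((a:ℝ) - (z i))/2)) * Real.sin (Real.pi * ν * ((a:ℝ) - (z i)) / a))) = 0 := by
    intro ν hν
    have h1 := hc ν hν
    have hfac : (∑ i, π i * (Acoef a p ν (z i) - C * (Acoef a p ν (z i) + Bcoef a p ν (z i))))
        = (2/(a:ℝ)) * Real.sin (Real.pi * ν / a) *
          (∑ i, ((1-C) * (π i * ((1-p)/p) ^ ((z i:ℝ)/2)) * Real.sin (Real.pi * ν * (z i) / a)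
            - C * (π i * (p/(1-p)) ^ (((a:ℝ) - (z i))/2)) * Real.sin (Real.pi * ν * ((a:ℝ) - (z i)) / a))) := by
      rw [Finset.mul_sum]
      refine Finset.sum_congr rfl fun i _ => ?_
      unfold Acoef Bcoef
      ring
    rw [hfac] at h1
    rcases mul_eq_zero.mp h1 with h | h
    · exfalso
      rcases mul_eq_zero.mp h with h' | h'
      · have : (2:ℝ)/(a:ℝ) ≠ 0 := by positivity
        exact this h'
      · exact hsinne ν hν h'
    · exact h
  -- bounds helpers
  have hb : ∀ i : Fin m, 1 ≤ z i ∧ z i ≤ a - 1 := fun i => Finset.mem_Icc.mp (hzmem i)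
  have hmemrefl : ∀ i : Fin m, a - z i ∈ Finset.Icc 1 (a-1) := fun i =>
    Finset.mem_Icc.mpr (by have := hb i; omega)
  -- Step C : key balance identities
  have key : ∀ w ∈ Finset.Icc 1 (a-1),
      (∑ i, if z i = w then (1-C) * (π i * ((1-p)/p) ^ ((z i:ℝ)/2)) else 0)
        = ∑ i, if z i = a - w then C * (π i * (p/(1-p)) ^ (((a:ℝ) - (z i))/2)) else 0 := by
    intro w hw
    have horth1 : ∀ i : Fin m, ∑ ν ∈ Finset.Icc 1 (a-1),
        Real.sin (Real.pi * ν * (z i) / a) * Real.sin (Real.pi * ν * w / a)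
          = if z i = w then (a:ℝ)/2 else 0 := fun i => orth a ha (z i) w (hzmem i) hw
    have horth2 : ∀ i : Fin m, ∑ ν ∈ Finset.Icc 1 (a-1),
        Real.sin (Real.pi * ν * ((a:ℝ) - (z i)) / a) * Real.sin (Real.pi * ν * w / a)
          = if z i = a - w then (a:ℝ)/2 else 0 := by
      intro i
      have hle : z i ≤ a := by have := hb i; omega
      have hcast : ((a - z i : ℕ) : ℝ) = (a:ℝ) - (z i : ℝ) := by
        push_cast [hle]; ring
      have h := orth a ha (a - z i) w (hmemrefl i) hw
      rw [hcast] at h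
      rw [h]
      have hiff : (a - z i = w) ↔ (z i = a - w) := by
        rw [Finset.mem_Icc] at hw; have := hb i; omega
      by_cases hcase : z i = a - w
      · rw [if_pos hcase, if_pos (hiff.mpr hcase)]
      · rw [if_neg hcase, if_neg (fun h' => hcase (hiff.mp h'))]
    have hsum0 : ∑ ν ∈ Finset.Icc 1 (a-1),
        (∑ i, ((1-C) * (π i * ((1-p)/p) ^ ((z i:ℝ)/2)) * Real.sin (Real.pi * ν * (z i) / a)
          - C * (π i * (p/(1-p)) ^ (((a:ℝ) - (z i))/2)) * Real.sin (Real.pi * ν * ((a:ℝ) - (z i)) / a)))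
          * Real.sin (Real.pi * ν * w / a) = 0 :=
      Finset.sum_eq_zero fun ν hν => by rw [hD0 ν hν, zero_mul]
    have swap : ∑ ν ∈ Finset.Icc 1 (a-1),
        (∑ i, ((1-C) * (π i * ((1-p)/p) ^ ((z i:ℝ)/2)) * Real.sin (Real.pi * ν * (z i) / a)
          - C * (π i * (p/(1-p)) ^ (((a:ℝ) - (z i))/2)) * Real.sin (Real.pi * ν * ((a:ℝ) - (z i)) / a)))
          * Real.sin (Real.pi * ν * w / a)
        = ∑ i, ((1-C) * (π i * ((1-p)/p) ^ ((z i:ℝ)/2)) * (if z i = w then (a:ℝ)/2 else 0)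
            - C * (π i * (p/(1-p)) ^ (((a:ℝ) - (z i))/2)) * (if z i = a - w then (a:ℝ)/2 else 0)) := by
      simp only [Finset.sum_mul]
      rw [Finset.sum_comm]
      refine Finset.sum_congr rfl fun i _ => ?_
      rw [← horth1 i, ← horth2 i, Finset.mul_sum, Finset.mul_sum, ← Finset.sum_sub_distrib]
      refine Finset.sum_congr rfl fun ν _ => by ring
    rw [swap] at hsum0
    have ha2 : ((a:ℝ)/2) ≠ 0 := by positivity
    have l1 : ∑ i, (1-C) * (π i * ((1-p)/p) ^ ((z i:ℝ)/2)) * (if z i = w then (a:ℝ)/2 else 0)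
        = ((a:ℝ)/2) * ∑ i, (if z i = w then (1-C) * (π i * ((1-p)/p) ^ ((z i:ℝ)/2)) else 0) := by
      rw [Finset.mul_sum]
      refine Finset.sum_congr rfl fun i _ => ?_
      split_ifs <;> ring
    have l2 : ∑ i, C * (π i * (p/(1-p)) ^ (((a:ℝ) - (z i))/2)) * (if z i = a - w then (a:ℝ)/2 else 0)
        = ((a:ℝ)/2) * ∑ i, (if z i = a - w then C * (π i * (p/(1-p)) ^ (((a:ℝ) - (z i))/2)) else 0) := by
      rw [Finset.mul_sum]
      refine Finset.sum_congr rfl fun i _ => ?_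
      split_ifs <;> ring
    rw [Finset.sum_sub_distrib, l1, l2, sub_eq_zero] at hsum0
    exact mul_left_cancel₀ ha2 hsum0
  -- evaluations
  have evalL : ∀ i : Fin m,
      (∑ i', if z i' = z i then (1-C) * (π i' * ((1-p)/p) ^ ((z i':ℝ)/2)) else 0)
        = (1-C) * (π i * ((1-p)/p) ^ ((z i:ℝ)/2)) := by
    intro i
    rw [Finset.sum_eq_single i (fun b _ hb' => if_neg (fun h => hb' (hzinj h)))
      (fun h => absurd (Finset.mem_univ i) h), if_pos rfl]
  set i0 : Fin m := ⟨0, hm⟩ with hi0def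
  have hC1 : C ≠ 1 := by
    intro hC
    have hk := key (a - z i0) (hmemrefl i0)
    have haa : a - (a - z i0) = z i0 := by have := hb i0; omega
    rw [haa] at hk
    have hR0 : (∑ i', if z i' = z i0 then C * (π i' * (p/(1-p)) ^ (((a:ℝ) - (z i'))/2)) else 0)
        = C * (π i0 * (p/(1-p)) ^ (((a:ℝ) - (z i0))/2)) := by
      rw [Finset.sum_eq_single i0 (fun b _ hb' => if_neg (fun h => hb' (hzinj h)))
        (fun h => absurd (Finset.mem_univ i0) h), if_pos rfl]
    rw [hR0, hC] at hk
    have hL0 : (∑ i', if z i' = a - z i0 then (1-(1:ℝ)) * (π i' * ((1-p)/p) ^ ((z i':ℝ)/2)) else 0) = 0 :=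
      Finset.sum_eq_zero fun i' _ => by split_ifs <;> ring
    rw [hL0] at hk
    have hpos : 0 < π i0 * (p/(1-p)) ^ (((a:ℝ) - (z i0))/2) := mul_pos (hπ i0) (hRpos _)
    rw [one_mul] at hk
    linarith
  have h1C : (1:ℝ) - C ≠ 0 := fun h => hC1 (by linarith)
  -- Part 1
  have part1 : ∀ i, ∃ j, z j = a - z i := by
    intro i
    by_contra hno
    push_neg at hno
    have hk := key (z i) (hzmem i)
    rw [evalL i, Finset.sum_eq_zero (fun i' _ => if_neg (hno i'))] at hk
    exact (mul_ne_zero h1C (ne_of_gt (mul_pos (hπ i) (hrpos _)))) hk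
  -- per-pair equations
  have Eqn : ∀ i j, z j = a - z i →
      (1-C) * (π i * ((1-p)/p) ^ ((z i:ℝ)/2)) = C * (π j * (p/(1-p)) ^ ((z i:ℝ)/2)) := by
    intro i j hj
    have hk := key (z i) (hzmem i)
    have hR0 : (∑ i', if z i' = a - z i then C * (π i' * (p/(1-p)) ^ (((a:ℝ) - (z i'))/2)) else 0)
        = C * (π j * (p/(1-p)) ^ (((a:ℝ) - (z j))/2)) := by
      rw [Finset.sum_eq_single j (fun b _ hb' => if_neg (fun h => hb' (hzinj (h.trans hj.symm))))
        (fun h => absurd (Finset.mem_univ j) h), if_pos hj]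
    rw [evalL i, hR0] at hk
    have hcast : (a:ℝ) - (z j : ℝ) = (z i : ℝ) := by
      have h1 := hb i
      have hsum : z j + z i = a := by omega
      have : ((z j : ℕ):ℝ) + ((z i : ℕ):ℝ) = ((a:ℕ):ℝ) := by exact_mod_cast congrArg (Nat.cast : ℕ → ℝ) hsum
      linarith
    rw [hcast] at hk
    exact hk
  obtain ⟨j0, hj0⟩ := part1 i0
  have hij0 : z i0 = a - z j0 := by have h1 := hb i0; have h2 := hb j0; omega
  have E1 := Eqn i0 j0 hj0
  have E2 := Eqn j0 i0 hij0
  have hzz : (z i0 : ℝ)/2 + (z j0 : ℝ)/2 = (a:ℝ)/2 := by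
    have h1 := hb i0
    have hsum : z i0 + z j0 = a := by omega
    have : ((z i0 : ℕ):ℝ) + ((z j0 : ℕ):ℝ) = ((a:ℕ):ℝ) := by exact_mod_cast congrArg (Nat.cast : ℕ → ℝ) hsum
    linarith
  have hr1 : ((1-p)/p) ^ ((z i0:ℝ)/2) * ((1-p)/p) ^ ((z j0:ℝ)/2) = ((1-p)/p) ^ ((a:ℝ)/2) := by
    rw [← Real.rpow_add hr, hzz]
  have hR1 : (p/(1-p)) ^ ((z i0:ℝ)/2) * (p/(1-p)) ^ ((z j0:ℝ)/2) = (p/(1-p)) ^ ((a:ℝ)/2) := by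
    rw [← Real.rpow_add hR, hzz]
  have hinvρ : (p/(1-p)) ^ ((a:ℝ)/2) * ((1-p)/p) ^ ((a:ℝ)/2) = 1 := by
    rw [← Real.mul_rpow (le_of_lt hR) (le_of_lt hr),
      show (p/(1-p)) * ((1-p)/p) = 1 by field_simp]
    exact Real.one_rpow _
  have Emul : ((1-C) * (π i0 * ((1-p)/p) ^ ((z i0:ℝ)/2))) * ((1-C) * (π j0 * ((1-p)/p) ^ ((z j0:ℝ)/2)))
      = (C * (π j0 * (p/(1-p)) ^ ((z i0:ℝ)/2))) * (C * (π i0 * (p/(1-p)) ^ ((z j0:ℝ)/2))) := by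
    rw [E1, E2]
  have Esq : ((1-C)^2 * (((1-p)/p) ^ ((a:ℝ)/2))^2) * (π i0 * π j0)
      = C^2 * (π i0 * π j0) := by
    linear_combination (((1-p)/p) ^ ((a:ℝ)/2)) * Emul
      - (1-C)^2 * (π i0 * π j0) * (((1-p)/p) ^ ((a:ℝ)/2)) * hr1
      + C^2 * (π i0 * π j0) * (((1-p)/p) ^ ((a:ℝ)/2)) * hR1
      + C^2 * (π i0 * π j0) * hinvρ
  have Esq' : (1-C)^2 * (((1-p)/p) ^ ((a:ℝ)/2))^2 = C^2 :=
    mul_right_cancel₀ (ne_of_gt (mul_pos (hπ i0) (hπ j0))) Esq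
  have hfac : (C - (1-C) * ((1-p)/p) ^ ((a:ℝ)/2)) * (C + (1-C) * ((1-p)/p) ^ ((a:ℝ)/2)) = 0 := by
    linear_combination -Esq'
  have hCrel : C = (1-C) * ((1-p)/p) ^ ((a:ℝ)/2) := by
    rcases mul_eq_zero.mp hfac with h | h
    · linarith
    · exfalso
      have hplug : (1-C) * ((π i0 * ((1-p)/p) ^ ((z i0:ℝ)/2))
          + ((1-p)/p) ^ ((a:ℝ)/2) * (π j0 * (p/(1-p)) ^ ((z i0:ℝ)/2))) = 0 := by
        linear_combination E1 + (π j0 * (p/(1-p)) ^ ((z i0:ℝ)/2)) * h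
      rcases mul_eq_zero.mp hplug with h' | h'
      · exact h1C h'
      · have hp1' : 0 < π i0 * ((1-p)/p) ^ ((z i0:ℝ)/2) := mul_pos (hπ i0) (hrpos _)
        have hp2' : 0 < ((1-p)/p) ^ ((a:ℝ)/2) * (π j0 * (p/(1-p)) ^ ((z i0:ℝ)/2)) :=
          mul_pos (hrpos _) (mul_pos (hπ j0) (hRpos _))
        linarith
  have part2 : C = ((1-p)/p) ^ ((a:ℝ)/2) / (1 + ((1-p)/p) ^ ((a:ℝ)/2)) := by
    have hρ1 : (0:ℝ) < 1 + ((1-p)/p) ^ ((a:ℝ)/2) := by positivity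
    rw [eq_div_iff (ne_of_gt hρ1)]
    linear_combination hCrel
  have part3 : ∀ i j, z j = a - z i →
      π i * (p/(1-p)) ^ (((a:ℝ) - z i)/2) = π j * (p/(1-p)) ^ ((z i:ℝ)/2) := by
    intro i j hj
    have hE := Eqn i j hj
    have step : π i * ((1-p)/p) ^ ((z i:ℝ)/2)
        = ((1-p)/p) ^ ((a:ℝ)/2) * (π j * (p/(1-p)) ^ ((z i:ℝ)/2)) := by
      have h2 : (1-C) * (π i * ((1-p)/p) ^ ((z i:ℝ)/2))
          = (1-C) * (((1-p)/p) ^ ((a:ℝ)/2) * (π j * (p/(1-p)) ^ ((z i:ℝ)/2))) := by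
        linear_combination hE + (π j * (p/(1-p)) ^ ((z i:ℝ)/2)) * hCrel
      exact mul_left_cancel₀ h1C h2
    have haux : (p/(1-p)) ^ (((a:ℝ) - z i)/2) * ((1-p)/p) ^ ((a:ℝ)/2) = ((1-p)/p) ^ ((z i:ℝ)/2) := by
      rw [show p/(1-p) = ((1-p)/p)⁻¹ by rw [inv_div],
        Real.inv_rpow (le_of_lt hr), ← Real.rpow_neg (le_of_lt hr), ← Real.rpow_add hr]
      congr 1
      ring
    have h2 : π i * (p/(1-p)) ^ (((a:ℝ) - z i)/2) * ((1-p)/p) ^ ((a:ℝ)/2)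
        = π j * (p/(1-p)) ^ ((z i:ℝ)/2) * ((1-p)/p) ^ ((a:ℝ)/2) := by
      calc π i * (p/(1-p)) ^ (((a:ℝ) - z i)/2) * ((1-p)/p) ^ ((a:ℝ)/2)
          = π i * ((p/(1-p)) ^ (((a:ℝ) - z i)/2) * ((1-p)/p) ^ ((a:ℝ)/2)) := by ring
        _ = π i * ((1-p)/p) ^ ((z i:ℝ)/2) := by rw [haux]
        _ = ((1-p)/p) ^ ((a:ℝ)/2) * (π j * (p/(1-p)) ^ ((z i:ℝ)/2)) := step
        _ = π j * (p/(1-p)) ^ ((z i:ℝ)/2) * ((1-p)/p) ^ ((a:ℝ)/2) := by ring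
    exact mul_right_cancel₀ (ne_of_gt (hrpos ((a:ℝ)/2))) h2
  exact ⟨part1, part2, part3⟩
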